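/- arXiv:1004.1386 — 2 statements merged into one kernel-verified Lean document; each statement's English description precedes it below -/
import Mathlib

section
/- Monotonicity of Λ(·|B) under projection: with notation as above, if σ̃_B is a positive trace-class operator with P_k^A ⊗ σ̃_B ≥ ρ_AB^k, then for k' ≤ k, P_{k'}^A ⊗ (P_{k'}^B σ̃_B P_{k'}^B) ≥ ρ_AB^{k'}; consequently Λ(ρ_AB^{k'}|B) ≤ Λ(ρ_AB^k|B) ≤ Λ(ρ_AB|B), where Λ(ρ|B) = inf{tr σ̃_B : σ̃_B ≥ 0 trace class, id_A ⊗ σ̃_B ≥ ρ} (restricted identity allowed by supp ρ_AB^k). -/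
open scoped InnerProductSpace ComplexOrder
open ContinuousLinearMap Filter Topology

set_option synthInstance.maxHeartbeats 1000000
set_option maxHeartbeats 1600000

noncomputable section

/-- The rank-one operator `|x⟩⟨y|`. -/
def dyad {H : Type*} [NormedAddCommGroup H] [InnerProductSpace ℂ H] (x y : H) :
    H →L[ℂ] H := (innerSL ℂ y).smulRight x

/-- The trace of an operator along a Hilbert basis (sum of real parts of the diagonal). -/
def trAlong {H : Type*} [NormedAddCommGroup H] [InnerProductSpace ℂ H] {ι : Type*}
    (e : HilbertBasis ι ℂ H) (T : H →L[ℂ] H) : ℝ :=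
  ∑' i, RCLike.re ⟪e i, T (e i)⟫_ℂ

/-- The complex trace of an operator along a Hilbert basis. -/
def trCAlong {H : Type*} [NormedAddCommGroup H] [InnerProductSpace ℂ H] {ι : Type*}
    (e : HilbertBasis ι ℂ H) (T : H →L[ℂ] H) : ℂ :=
  ∑' i, ⟪e i, T (e i)⟫_ℂ

/-- The absolute value `√(T†T)` of a bounded operator. -/
def absOp {H : Type*} [NormedAddCommGroup H] [InnerProductSpace ℂ H] [CompleteSpace H]
    (T : H →L[ℂ] H) : H →L[ℂ] H := CFC.sqrt (ContinuousLinearMap.adjoint T * T)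

/-- The trace norm `‖T‖₁ = tr √(T†T)` along a Hilbert basis. -/
def trNormAlong {H : Type*} [NormedAddCommGroup H] [InnerProductSpace ℂ H] [CompleteSpace H]
    {ι : Type*} (e : HilbertBasis ι ℂ H) (T : H →L[ℂ] H) : ℝ :=
  trAlong e (absOp T)

/-- `T` is trace class (w.r.t. the Hilbert basis `e`): the diagonal sum of `√(T†T)` converges. -/
def IsTraceClass {H : Type*} [NormedAddCommGroup H] [InnerProductSpace ℂ H] [CompleteSpace H]
    {ι : Type*} (e : HilbertBasis ι ℂ H) (T : H →L[ℂ] H) : Prop :=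
  Summable fun i => RCLike.re ⟪e i, absOp T (e i)⟫_ℂ

/-- An orthogonal projection: a self-adjoint idempotent bounded operator. -/
def IsOrthoProj {H : Type*} [NormedAddCommGroup H] [InnerProductSpace ℂ H] [CompleteSpace H]
    (P : H →L[ℂ] H) : Prop := IsSelfAdjoint P ∧ IsIdempotentElem P

/-- A realization of the Hilbert-space tensor product `H = H_A ⊗ H_B`: a bilinear map
`tmul` compatible with the inner products, with total range, together with the induced
tensor product `map` of bounded operators. -/
structure HilbertTensor (HA HB H : Type*) [NormedAddCommGroup HA] [InnerProductSpace ℂ HA]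
    [NormedAddCommGroup HB] [InnerProductSpace ℂ HB]
    [NormedAddCommGroup H] [InnerProductSpace ℂ H] where
  tmul : HA →ₗ[ℂ] HB →ₗ[ℂ] H
  inner_tmul : ∀ (a a' : HA) (b b' : HB),
    ⟪tmul a b, tmul a' b'⟫_ℂ = ⟪a, a'⟫_ℂ * ⟪b, b'⟫_ℂ
  dense_span : Dense ((Submodule.span ℂ {z : H | ∃ a b, z = tmul a b} : Submodule ℂ H) : Set H)
  map : (HA →L[ℂ] HA) → (HB →L[ℂ] HB) → (H →L[ℂ] H)
  map_tmul : ∀ (S : HA →L[ℂ] HA) (T : HB →L[ℂ] HB) (a : HA) (b : HB),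
    map S T (tmul a b) = tmul (S a) (T b)

/-- `Λ(ρ_AB|B) = inf { tr σ̃ : σ̃ ≥ 0 trace class, id_A ⊗ σ̃ ≥ ρ_AB }`, valued in `EReal`
(the infimum of the empty set being `⊤`, i.e. `H_min = -∞`). -/
def LamB {HA HB H : Type*} [NormedAddCommGroup HA] [InnerProductSpace ℂ HA]
    [NormedAddCommGroup HB] [InnerProductSpace ℂ HB] [CompleteSpace HB]
    [NormedAddCommGroup H] [InnerProductSpace ℂ H] [CompleteSpace H]
    (TP : HilbertTensor HA HB H) {κ : Type*} (f : HilbertBasis κ ℂ HB)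
    (ρ : H →L[ℂ] H) : EReal :=
  sInf {x : EReal | ∃ σ : HB →L[ℂ] HB, σ.IsPositive ∧ IsTraceClass f σ ∧
    ρ ≤ TP.map 1 σ ∧ x = (trAlong f σ : EReal)}

/-- `Λ(ρ_AB|σ_B) = inf { λ ∈ ℝ : λ·(id_A ⊗ σ_B) ≥ ρ_AB }`, valued in `EReal`. -/
def LamCond {HA HB H : Type*} [NormedAddCommGroup HA] [InnerProductSpace ℂ HA]
    [NormedAddCommGroup HB] [InnerProductSpace ℂ HB]
    [NormedAddCommGroup H] [InnerProductSpace ℂ H] [CompleteSpace H]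
    (TP : HilbertTensor HA HB H) (ρ : H →L[ℂ] H) (σ : HB →L[ℂ] HB) : EReal :=
  sInf {x : EReal | ∃ l : ℝ, x = (l : EReal) ∧ ρ ≤ l • TP.map 1 σ}

/-- The generalized fidelity `F̄(ρ,σ) = ‖√ρ√σ‖₁ + √((1-tr ρ)(1-tr σ))`. -/
def genFid {H : Type*} [NormedAddCommGroup H] [InnerProductSpace ℂ H] [CompleteSpace H]
    {ι : Type*} (e : HilbertBasis ι ℂ H) (ρ σ : H →L[ℂ] H) : ℝ :=
  trNormAlong e (CFC.sqrt ρ * CFC.sqrt σ) +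
    Real.sqrt ((1 - trAlong e ρ) * (1 - trAlong e σ))

/-- The purified distance `P(ρ,σ) = √(1 - F̄(ρ,σ)²)`. -/
def purifiedDist {H : Type*} [NormedAddCommGroup H] [InnerProductSpace ℂ H] [CompleteSpace H]
    {ι : Type*} (e : HilbertBasis ι ℂ H) (ρ σ : H →L[ℂ] H) : ℝ :=
  Real.sqrt (1 - (genFid e ρ σ) ^ 2)

/-- Positivity of a square matrix of operators, viewed as an operator on `Hⁿ`. -/
def MatPos {H : Type*} [NormedAddCommGroup H] [InnerProductSpace ℂ H] (n : ℕ)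
    (M : Matrix (Fin n) (Fin n) (H →L[ℂ] H)) : Prop :=
  ∀ v : Fin n → H, 0 ≤ ∑ i, ∑ j, ⟪v i, M i j (v j)⟫_ℂ

/-- Complete positivity of a linear map on operators. -/
def IsCPMap {H : Type*} [NormedAddCommGroup H] [InnerProductSpace ℂ H]
    (E : (H →L[ℂ] H) →ₗ[ℂ] (H →L[ℂ] H)) : Prop :=
  ∀ (n : ℕ) (M : Matrix (Fin n) (Fin n) (H →L[ℂ] H)),
    MatPos n M → MatPos n (fun i j => E (M i j))

end


noncomputable section AuxLemmas

open scoped ENNReal NNReal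

section SingleSpace

variable {E : Type*} [NormedAddCommGroup E] [InnerProductSpace ℂ E] [CompleteSpace E]

lemma absOp_of_isPositive {T : E →L[ℂ] E} (hT : T.IsPositive) : absOp T = T := by
  have h0 : (0 : E →L[ℂ] E) ≤ T := (ContinuousLinearMap.nonneg_iff_isPositive T).mpr hT
  rw [absOp, ← ContinuousLinearMap.star_eq_adjoint, hT.isSelfAdjoint]
  exact CFC.sqrt_mul_self T h0

lemma conj_le_conj {X Y C : E →L[ℂ] E} (hC : IsSelfAdjoint C) (h : X ≤ Y) :
    C ∘L X ∘L C ≤ C ∘L Y ∘L C := by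
  rw [ContinuousLinearMap.le_def] at h ⊢
  have h2 := h.conj_adjoint C
  rw [hC.adjoint_eq] at h2
  have h3 : C ∘L Y ∘L C - C ∘L X ∘L C = C ∘L (Y - X) ∘L C := by
    rw [ContinuousLinearMap.sub_comp, ContinuousLinearMap.comp_sub]
  rwa [h3]

lemma orthoProj_idem_apply {Q : E →L[ℂ] E} (hQ : IsOrthoProj Q) (x : E) : Q (Q x) = Q x := by
  have h := DFunLike.congr_fun hQ.2 x
  simpa [ContinuousLinearMap.mul_apply] using h

lemma orthoProj_norm_le {Q : E →L[ℂ] E} (hQ : IsOrthoProj Q) (x : E) : ‖Q x‖ ≤ ‖x‖ := by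
  have hsym := ContinuousLinearMap.isSelfAdjoint_iff_isSymmetric.mp hQ.1
  have h1 : (‖Q x‖ : ℝ) ^ 2 = RCLike.re ⟪Q x, Q x⟫_ℂ := (inner_self_eq_norm_sq _).symm
  have h2 : ⟪Q (Q x), x⟫_ℂ = ⟪Q x, Q x⟫_ℂ := hsym (Q x) x
  rw [orthoProj_idem_apply hQ] at h2
  have h3 : RCLike.re ⟪Q x, x⟫_ℂ ≤ ‖Q x‖ * ‖x‖ :=
    le_trans (RCLike.re_le_norm _) (norm_inner_le_norm _ _)
  rcases eq_or_lt_of_le (norm_nonneg (Q x)) with h | h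
  · rw [← h]; exact norm_nonneg x
  · nlinarith [h1, h2 ▸ h3]

omit [CompleteSpace E] in
lemma parseval_sq {ι : Type*} (b : HilbertBasis ι ℂ E) (x : E) :
    HasSum (fun i => ‖⟪b i, x⟫_ℂ‖ ^ 2) (‖x‖ ^ 2) := by
  have h := b.hasSum_inner_mul_inner x x
  have h2 := RCLike.hasSum_re (𝕜 := ℂ) h
  rw [inner_self_eq_norm_sq] at h2
  refine h2.congr_fun fun i => ?_
  rw [← inner_conj_symm (b i) x, RCLike.mul_conj, RCLike.norm_conj]
  norm_cast

lemma trace_conj_proj {ι : Type*} (f : HilbertBasis ι ℂ E) {Q τ : E →L[ℂ] E}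
    (hQ : IsOrthoProj Q) (hτ : τ.IsPositive) (htc : IsTraceClass f τ) :
    IsTraceClass f (Q ∘L τ ∘L Q) ∧ trAlong f (Q ∘L τ ∘L Q) ≤ trAlong f τ := by
  classical
  have hQsym := ContinuousLinearMap.isSelfAdjoint_iff_isSymmetric.mp hQ.1
  have hQsym' : ∀ x y : E, ⟪Q x, y⟫_ℂ = ⟪x, Q y⟫_ℂ := fun x y => hQsym x y
  have hτ0 : (0 : E →L[ℂ] E) ≤ τ := (ContinuousLinearMap.nonneg_iff_isPositive τ).mpr hτ
  set A := CFC.sqrt τ with hAdef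
  have hAsa : IsSelfAdjoint A := IsSelfAdjoint.of_nonneg (CFC.sqrt_nonneg τ)
  have hAsym' : ∀ x y : E, ⟪A x, y⟫_ℂ = ⟪x, A y⟫_ℂ := fun x y =>
    ContinuousLinearMap.isSelfAdjoint_iff_isSymmetric.mp hAsa x y
  have hAA : ∀ x, A (A x) = τ x := by
    intro x
    have h : A * A = τ := by rw [hAdef]; exact CFC.sqrt_mul_sqrt_self τ hτ0
    calc A (A x) = (A * A) x := rfl
      _ = τ x := by rw [h]
  have hdiag : ∀ x : E, RCLike.re ⟪x, τ x⟫_ℂ = ‖A x‖ ^ 2 := by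
    intro x
    rw [← hAA x, ← hAsym' x (A x), inner_self_eq_norm_sq]
  set d : ι → ℝ := fun i => ‖A (Q (f i))‖ ^ 2 with hd
  set g : ι → ℝ := fun j => ‖A (f j)‖ ^ 2 with hg
  have hdiagQ : ∀ i, RCLike.re ⟪f i, (Q ∘L τ ∘L Q) (f i)⟫_ℂ = d i := by
    intro i
    simp only [ContinuousLinearMap.comp_apply]
    rw [← hQsym' (f i) (τ (Q (f i)))]
    exact hdiag (Q (f i))
  have hdiagτ : ∀ j, RCLike.re ⟪f j, τ (f j)⟫_ℂ = g j := fun j => hdiag (f j)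
  have habsτ : absOp τ = τ := absOp_of_isPositive hτ
  have hgsum : Summable g := by
    have h := htc
    rw [IsTraceClass] at h
    simp only [habsτ] at h
    exact h.congr fun j => hdiagτ j
  have hgnn : ∀ j, 0 ≤ g j := fun j => sq_nonneg _
  have hdnn : ∀ i, 0 ≤ d i := fun i => sq_nonneg _
  set F : ι → ι → ℝ≥0∞ := fun i j => ENNReal.ofReal (‖⟪f j, A (Q (f i))⟫_ℂ‖ ^ 2) with hF
  have hrow : ∀ i, ∑' j, F i j = ENNReal.ofReal (d i) := by
    intro i
    have hp := parseval_sq f (A (Q (f i)))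
    rw [show d i = ‖A (Q (f i))‖ ^ 2 from rfl, ← hp.tsum_eq,
      ENNReal.ofReal_tsum_of_nonneg (fun j => sq_nonneg _) hp.summable]
  have hswap : ∀ i j, F i j = ENNReal.ofReal (‖⟪f i, Q (A (f j))⟫_ℂ‖ ^ 2) := by
    intro i j
    have h1 : ⟪f j, A (Q (f i))⟫_ℂ = ⟪Q (A (f j)), f i⟫_ℂ := by
      rw [← hAsym' (f j) (Q (f i)), ← hQsym' (A (f j)) (f i)]
    simp only [hF, h1, ← norm_inner_symm (f i) (Q (A (f j)))]
  have hcol : ∀ j, ∑' i, F i j ≤ ENNReal.ofReal (g j) := by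
    intro j
    have hp := parseval_sq f (Q (A (f j)))
    have he : ∑' i, F i j = ENNReal.ofReal (‖Q (A (f j))‖ ^ 2) := by
      simp_rw [hswap]
      rw [← hp.tsum_eq, ENNReal.ofReal_tsum_of_nonneg (fun i => sq_nonneg _) hp.summable]
    rw [he]
    apply ENNReal.ofReal_le_ofReal
    have hc := orthoProj_norm_le hQ (A (f j))
    have hn := norm_nonneg (Q (A (f j)))
    have h : ‖Q (A (f j))‖ ^ 2 ≤ ‖A (f j)‖ ^ 2 := by nlinarith
    exact h
  have hsum_row : ∑' i, ENNReal.ofReal (d i) ≤ ENNReal.ofReal (trAlong f τ) :=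
    calc ∑' i, ENNReal.ofReal (d i) = ∑' i, ∑' j, F i j := tsum_congr fun i => (hrow i).symm
      _ = ∑' j, ∑' i, F i j := ENNReal.tsum_comm
      _ ≤ ∑' j, ENNReal.ofReal (g j) := ENNReal.tsum_le_tsum hcol
      _ = ENNReal.ofReal (∑' j, g j) := (ENNReal.ofReal_tsum_of_nonneg hgnn hgsum).symm
      _ = ENNReal.ofReal (trAlong f τ) := by
          rw [trAlong]
          congr 1
          exact tsum_congr fun j => (hdiagτ j).symm
  have hfin : ∑' i, ENNReal.ofReal (d i) ≠ ⊤ :=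
    (lt_of_le_of_lt hsum_row ENNReal.ofReal_lt_top).ne
  have hdsum : Summable d := by
    have h := ENNReal.summable_toReal hfin
    exact h.congr fun i => ENNReal.toReal_ofReal (hdnn i)
  have habsQ : absOp (Q ∘L τ ∘L Q) = Q ∘L τ ∘L Q := by
    apply absOp_of_isPositive
    have h := hτ.conj_adjoint Q
    rwa [hQ.1.adjoint_eq] at h
  constructor
  · rw [IsTraceClass]
    simp only [habsQ]
    exact hdsum.congr fun i => (hdiagQ i).symm
  · rw [trAlong, trAlong, tsum_congr hdiagQ, tsum_congr hdiagτ]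
    have h2 : ENNReal.ofReal (∑' i, d i) ≤ ENNReal.ofReal (∑' j, g j) := by
      rw [ENNReal.ofReal_tsum_of_nonneg hdnn hdsum]
      calc ∑' i, ENNReal.ofReal (d i) = ∑' i, ∑' j, F i j := tsum_congr fun i => (hrow i).symm
        _ = ∑' j, ∑' i, F i j := ENNReal.tsum_comm
        _ ≤ ∑' j, ENNReal.ofReal (g j) := ENNReal.tsum_le_tsum hcol
        _ = ENNReal.ofReal (∑' j, g j) := (ENNReal.ofReal_tsum_of_nonneg hgnn hgsum).symm
    exact (ENNReal.ofReal_le_ofReal_iff (tsum_nonneg hgnn)).mp h2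

end SingleSpace

section Tensor

variable {HA HB H : Type*} [NormedAddCommGroup HA] [InnerProductSpace ℂ HA]
  [NormedAddCommGroup HB] [InnerProductSpace ℂ HB]
  [NormedAddCommGroup H] [InnerProductSpace ℂ H]

lemma HilbertTensor.ext_tensor (TP : HilbertTensor HA HB H) {F G : H →L[ℂ] H}
    (h : ∀ a b, F (TP.tmul a b) = G (TP.tmul a b)) : F = G :=
  ContinuousLinearMap.ext_on TP.dense_span (by rintro z ⟨a, b, rfl⟩; exact h a b)

lemma HilbertTensor.map_comp (TP : HilbertTensor HA HB H)
    (S S' : HA →L[ℂ] HA) (T T' : HB →L[ℂ] HB) :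
    TP.map S T ∘L TP.map S' T' = TP.map (S ∘L S') (T ∘L T') :=
  TP.ext_tensor fun a b => by simp [TP.map_tmul]

lemma HilbertTensor.map_sub_left (TP : HilbertTensor HA HB H)
    (S S' : HA →L[ℂ] HA) (T : HB →L[ℂ] HB) :
    TP.map (S - S') T = TP.map S T - TP.map S' T :=
  TP.ext_tensor fun a b => by
    simp [TP.map_tmul, ContinuousLinearMap.sub_apply, map_sub, LinearMap.sub_apply]

lemma HilbertTensor.map_symm (TP : HilbertTensor HA HB H)
    {S : HA →L[ℂ] HA} {T : HB →L[ℂ] HB}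
    (hS : ∀ a a', ⟪S a, a'⟫_ℂ = ⟪a, S a'⟫_ℂ) (hT : ∀ b b', ⟪T b, b'⟫_ℂ = ⟪b, T b'⟫_ℂ) :
    ∀ x y : H, ⟪TP.map S T x, y⟫_ℂ = ⟪x, TP.map S T y⟫_ℂ := by
  have h1 : ∀ (a : HA) (b : HB) (y : H),
      ⟪TP.map S T (TP.tmul a b), y⟫_ℂ = ⟪TP.tmul a b, TP.map S T y⟫_ℂ := by
    intro a b
    have key : innerSL ℂ (TP.map S T (TP.tmul a b)) =
        innerSL ℂ (TP.tmul a b) ∘L TP.map S T := by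
      apply ContinuousLinearMap.ext_on TP.dense_span
      rintro z ⟨a', b', rfl⟩
      simp only [innerSL_apply_apply, ContinuousLinearMap.comp_apply, TP.map_tmul, TP.inner_tmul]
      rw [hS, hT]
    intro y
    simpa using ContinuousLinearMap.ext_iff.mp key y
  intro x y
  have key : innerSL ℂ y ∘L TP.map S T = innerSL ℂ (TP.map S T y) := by
    apply ContinuousLinearMap.ext_on TP.dense_span
    rintro z ⟨a, b, rfl⟩
    simp only [innerSL_apply_apply, ContinuousLinearMap.comp_apply]
    calc ⟪y, TP.map S T (TP.tmul a b)⟫_ℂ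
        = starRingEnd ℂ ⟪TP.map S T (TP.tmul a b), y⟫_ℂ := (inner_conj_symm _ _).symm
      _ = starRingEnd ℂ ⟪TP.tmul a b, TP.map S T y⟫_ℂ := by rw [h1 a b y]
      _ = ⟪TP.map S T y, TP.tmul a b⟫_ℂ := inner_conj_symm _ _
  have hxy := ContinuousLinearMap.ext_iff.mp key x
  simp only [innerSL_apply_apply, ContinuousLinearMap.comp_apply] at hxy
  calc ⟪TP.map S T x, y⟫_ℂ
      = starRingEnd ℂ ⟪y, TP.map S T x⟫_ℂ := (inner_conj_symm _ _).symm
    _ = starRingEnd ℂ ⟪TP.map S T y, x⟫_ℂ := by rw [hxy]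
    _ = ⟪x, TP.map S T y⟫_ℂ := inner_conj_symm _ _

end Tensor

section TensorComplete

variable {HA HB H : Type*} [NormedAddCommGroup HA] [InnerProductSpace ℂ HA] [CompleteSpace HA]
  [NormedAddCommGroup HB] [InnerProductSpace ℂ HB] [CompleteSpace HB]
  [NormedAddCommGroup H] [InnerProductSpace ℂ H] [CompleteSpace H]

lemma HilbertTensor.map_isSelfAdjoint (TP : HilbertTensor HA HB H)
    {S : HA →L[ℂ] HA} {T : HB →L[ℂ] HB} (hS : IsSelfAdjoint S) (hT : IsSelfAdjoint T) :
    IsSelfAdjoint (TP.map S T) :=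
  ContinuousLinearMap.isSelfAdjoint_iff_isSymmetric.mpr fun x y =>
    TP.map_symm (fun a a' => ContinuousLinearMap.isSelfAdjoint_iff_isSymmetric.mp hS a a')
      (fun b b' => ContinuousLinearMap.isSelfAdjoint_iff_isSymmetric.mp hT b b') x y

lemma HilbertTensor.map_isPositive (TP : HilbertTensor HA HB H)
    {Q : HA →L[ℂ] HA} {τ : HB →L[ℂ] HB} (hQ : IsOrthoProj Q) (hτ : τ.IsPositive) :
    (TP.map Q τ).IsPositive := by
  have hτ0 : (0 : HB →L[ℂ] HB) ≤ τ := (ContinuousLinearMap.nonneg_iff_isPositive τ).mpr hτ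
  set A := CFC.sqrt τ with hAdef
  have hAsa : IsSelfAdjoint A := IsSelfAdjoint.of_nonneg (CFC.sqrt_nonneg τ)
  have hAA : A ∘L A = τ := by
    rw [← ContinuousLinearMap.mul_def, hAdef]; exact CFC.sqrt_mul_sqrt_self τ hτ0
  have hQQ : Q ∘L Q = Q := by rw [← ContinuousLinearMap.mul_def]; exact hQ.2
  have hM : TP.map Q τ = TP.map Q A ∘L TP.map Q A := by rw [TP.map_comp, hQQ, hAA]
  have hMsa : IsSelfAdjoint (TP.map Q A) := TP.map_isSelfAdjoint hQ.1 hAsa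
  have hsym : ∀ x y, ⟪TP.map Q A x, y⟫_ℂ = ⟪x, TP.map Q A y⟫_ℂ :=
    TP.map_symm (fun a a' => ContinuousLinearMap.isSelfAdjoint_iff_isSymmetric.mp hQ.1 a a')
      (fun b b' => ContinuousLinearMap.isSelfAdjoint_iff_isSymmetric.mp hAsa b b')
  rw [hM]
  constructor
  · exact ContinuousLinearMap.isSelfAdjoint_iff_isSymmetric.mp
      (by simpa [sq, ContinuousLinearMap.mul_def] using hMsa.pow 2)
  · intro x
    have h1 : ⟪(TP.map Q A) ((TP.map Q A) x), x⟫_ℂ = ⟪(TP.map Q A) x, (TP.map Q A) x⟫_ℂ :=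
      hsym ((TP.map Q A) x) x
    show 0 ≤ RCLike.re ⟪(TP.map Q A ∘L TP.map Q A) x, x⟫_ℂ
    rw [ContinuousLinearMap.comp_apply, h1]
    exact inner_self_nonneg

lemma HilbertTensor.feas_transfer (TP : HilbertTensor HA HB H)
    {QA : HA →L[ℂ] HA} {QB : HB →L[ℂ] HB} (hQA : IsOrthoProj QA) (hQB : IsOrthoProj QB)
    {ρ' : H →L[ℂ] H} {τ : HB →L[ℂ] HB} (hτ : τ.IsPositive)
    (h : ρ' ≤ TP.map 1 τ) :
    TP.map QA QB ∘L ρ' ∘L TP.map QA QB ≤ TP.map 1 (QB ∘L τ ∘L QB) := by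
  have hC : IsSelfAdjoint (TP.map QA QB) := TP.map_isSelfAdjoint hQA.1 hQB.1
  have h1 := conj_le_conj hC h
  have h2 : TP.map QA QB ∘L TP.map 1 τ ∘L TP.map QA QB = TP.map QA (QB ∘L τ ∘L QB) := by
    rw [TP.map_comp, TP.map_comp]
    congr 1
    ext x
    simp [orthoProj_idem_apply hQA x]
  have h3 : TP.map QA (QB ∘L τ ∘L QB) ≤ TP.map 1 (QB ∘L τ ∘L QB) := by
    rw [ContinuousLinearMap.le_def, ← TP.map_sub_left]
    refine TP.map_isPositive ⟨?_, ?_⟩ ?_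
    · exact (IsSelfAdjoint.one _).sub hQA.1
    · exact hQA.2.one_sub
    · have hp := hτ.conj_adjoint QB
      rwa [hQB.1.adjoint_eq] at hp
  calc TP.map QA QB ∘L ρ' ∘L TP.map QA QB
      ≤ TP.map QA QB ∘L TP.map 1 τ ∘L TP.map QA QB := h1
    _ = TP.map QA (QB ∘L τ ∘L QB) := h2
    _ ≤ TP.map 1 (QB ∘L τ ∘L QB) := h3

lemma LamB_conj_le (TP : HilbertTensor HA HB H) {κ : Type*} (f : HilbertBasis κ ℂ HB)
    {QA : HA →L[ℂ] HA} {QB : HB →L[ℂ] HB} (hQA : IsOrthoProj QA) (hQB : IsOrthoProj QB)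
    (ρ' : H →L[ℂ] H) :
    LamB TP f (TP.map QA QB ∘L ρ' ∘L TP.map QA QB) ≤ LamB TP f ρ' := by
  apply le_sInf
  rintro x ⟨τ, hpos, htc, hle, rfl⟩
  have hτQ : (QB ∘L τ ∘L QB).IsPositive := by
    have h := hpos.conj_adjoint QB
    rwa [hQB.1.adjoint_eq] at h
  obtain ⟨htc', htr'⟩ := trace_conj_proj f hQB hpos htc
  refine le_trans (sInf_le ⟨QB ∘L τ ∘L QB, hτQ, htc',
    TP.feas_transfer hQA hQB hpos hle, rfl⟩) ?_
  exact_mod_cast htr'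

end TensorComplete

end AuxLemmas

noncomputable section

/-- If `P_k^A ⊗ σ̃_B ≥ ρ_AB^k` then for `k' ≤ k`,
`P_{k'}^A ⊗ (P_{k'}^B σ̃_B P_{k'}^B) ≥ ρ_AB^{k'}`; consequently
`Λ(ρ_AB^{k'}|B) ≤ Λ(ρ_AB^k|B) ≤ Λ(ρ_AB|B)`. -/
theorem LamB_projected_monotone
    {HA HB H : Type*} [NormedAddCommGroup HA] [InnerProductSpace ℂ HA] [CompleteSpace HA]
    [TopologicalSpace.SeparableSpace HA]
    [NormedAddCommGroup HB] [InnerProductSpace ℂ HB] [CompleteSpace HB]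
    [TopologicalSpace.SeparableSpace HB]
    [NormedAddCommGroup H] [InnerProductSpace ℂ H] [CompleteSpace H]
    [TopologicalSpace.SeparableSpace H]
    (TP : HilbertTensor HA HB H)
    {ι κ : Type*} (e : HilbertBasis ι ℂ H) (f : HilbertBasis κ ℂ HB)
    (ρ : H →L[ℂ] H) (σ : HB →L[ℂ] HB)
    (hρ : ρ.IsPositive) (hρtc : IsTraceClass e ρ) (hρtr : trAlong e ρ = 1)
    (hσ : σ.IsPositive) (hσtc : IsTraceClass f σ) (hσtr : trAlong f σ = 1)
    (PA : ℕ → HA →L[ℂ] HA) (PB : ℕ → HB →L[ℂ] HB)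
    (hPA : ∀ k, IsOrthoProj (PA k)) (hPB : ∀ k, IsOrthoProj (PB k))
    (hfinA : ∀ k, FiniteDimensional ℂ (LinearMap.range ((PA k : HA →ₗ[ℂ] HA))))
    (hfinB : ∀ k, FiniteDimensional ℂ (LinearMap.range ((PB k : HB →ₗ[ℂ] HB))))
    (hmonoA : ∀ k k', k ≤ k' → PA k' ∘L PA k = PA k)
    (hmonoB : ∀ k k', k ≤ k' → PB k' ∘L PB k = PB k)
    (k k' : ℕ) (hkk : k' ≤ k)
    (σt : HB →L[ℂ] HB) (hσt : σt.IsPositive) (hσttc : IsTraceClass f σt)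
    (hdom : TP.map (PA k) (PB k) ∘L ρ ∘L TP.map (PA k) (PB k) ≤ TP.map (PA k) σt) :
    (TP.map (PA k') (PB k') ∘L ρ ∘L TP.map (PA k') (PB k')
        ≤ TP.map (PA k') (PB k' ∘L σt ∘L PB k')) ∧
    LamB TP f (TP.map (PA k') (PB k') ∘L ρ ∘L TP.map (PA k') (PB k'))
      ≤ LamB TP f (TP.map (PA k) (PB k) ∘L ρ ∘L TP.map (PA k) (PB k)) ∧
    LamB TP f (TP.map (PA k) (PB k) ∘L ρ ∘L TP.map (PA k) (PB k)) ≤ LamB TP f ρ := by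
  have hidemA : ∀ m, PA m ∘L PA m = PA m := fun m => by
    rw [← ContinuousLinearMap.mul_def]; exact (hPA m).2
  have hAk : PA k ∘L PA k' = PA k' := hmonoA k' k hkk
  have hBk : PB k ∘L PB k' = PB k' := hmonoB k' k hkk
  have hAk' : PA k' ∘L PA k = PA k' := by
    have h := congrArg ContinuousLinearMap.adjoint hAk
    rwa [ContinuousLinearMap.adjoint_comp, (hPA k).1.adjoint_eq, (hPA k').1.adjoint_eq] at h
  have hBk' : PB k' ∘L PB k = PB k' := by
    have h := congrArg ContinuousLinearMap.adjoint hBk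
    rwa [ContinuousLinearMap.adjoint_comp, (hPB k).1.adjoint_eq, (hPB k').1.adjoint_eq] at h
  have hC : IsSelfAdjoint (TP.map (PA k') (PB k')) :=
    TP.map_isSelfAdjoint (hPA k').1 (hPB k').1
  have e1 : TP.map (PA k') (PB k') ∘L
      (TP.map (PA k) (PB k) ∘L ρ ∘L TP.map (PA k) (PB k)) ∘L TP.map (PA k') (PB k')
      = TP.map (PA k') (PB k') ∘L ρ ∘L TP.map (PA k') (PB k') := by
    have hassoc : TP.map (PA k') (PB k') ∘L
        (TP.map (PA k) (PB k) ∘L ρ ∘L TP.map (PA k) (PB k)) ∘L TP.map (PA k') (PB k')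
        = (TP.map (PA k') (PB k') ∘L TP.map (PA k) (PB k)) ∘L ρ ∘L
          (TP.map (PA k) (PB k) ∘L TP.map (PA k') (PB k')) := by
      ext x; simp
    rw [hassoc, TP.map_comp, TP.map_comp, hAk', hBk', hAk, hBk]
  have e2 : TP.map (PA k') (PB k') ∘L TP.map (PA k) σt ∘L TP.map (PA k') (PB k')
      = TP.map (PA k') (PB k' ∘L σt ∘L PB k') := by
    rw [TP.map_comp, TP.map_comp, hAk, hidemA k']
  have part1 : TP.map (PA k') (PB k') ∘L ρ ∘L TP.map (PA k') (PB k')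
      ≤ TP.map (PA k') (PB k' ∘L σt ∘L PB k') := by
    have h := conj_le_conj hC hdom
    rwa [e1, e2] at h
  refine ⟨part1, ?_, ?_⟩
  · have h := LamB_conj_le TP f (hPA k') (hPB k')
      (TP.map (PA k) (PB k) ∘L ρ ∘L TP.map (PA k) (PB k))
    rwa [e1] at h
  · exact LamB_conj_le TP f (hPA k) (hPB k) ρ


end
end

section
/- Attainment of the optimal conditioning state: let ρ_AB be a density operator on H_A ⊗ H_B (separable) with Λ(ρ_AB|B) := inf{tr σ̃_B : σ̃_B positive trace class, id_A ⊗ σ̃_B ≥ ρ_AB} finite. Then the infimum is attained: there exists a positive trace-class σ̃_B with id_A ⊗ σ̃_B ≥ ρ_AB and tr σ̃_B = Λ(ρ_AB|B). -/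
open scoped InnerProductSpace ComplexOrder
open ContinuousLinearMap Filter Topology

set_option synthInstance.maxHeartbeats 1000000
set_option maxHeartbeats 1600000

noncomputable section AuxLemmas

section HilbertAux

variable {H' : Type*} [NormedAddCommGroup H'] [InnerProductSpace ℂ H'] [CompleteSpace H']

lemma absOp_of_isPositive_s16 {σ : H' →L[ℂ] H'} (hσ : σ.IsPositive) : absOp σ = σ := by
  have hadj : ContinuousLinearMap.adjoint σ = σ := by
    have := hσ.isSelfAdjoint; rwa [isSelfAdjoint_iff'] at this
  rw [absOp, hadj]
  exact CFC.sqrt_mul_self σ ((σ.nonneg_iff_isPositive).mpr hσ)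

lemma diag_nonneg {σ : H' →L[ℂ] H'} (hσ : σ.IsPositive) (x : H') :
    0 ≤ RCLike.re ⟪x, σ x⟫_ℂ := by
  have h := hσ.inner_nonneg_left x
  rw [← inner_conj_symm] at h
  have h' := (Complex.nonneg_iff.mp h).1
  rw [Complex.conj_re] at h'
  exact h'

lemma trAlong_nonneg {ι : Type*} (f : HilbertBasis ι ℂ H') {σ : H' →L[ℂ] H'}
    (hσ : σ.IsPositive) : 0 ≤ trAlong f σ :=
  tsum_nonneg fun i => diag_nonneg hσ _

lemma diag_le_trAlong {ι : Type*} (f : HilbertBasis ι ℂ H') {σ : H' →L[ℂ] H'}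
    (hσ : σ.IsPositive) (hsum : Summable fun i => RCLike.re ⟪f i, σ (f i)⟫_ℂ) (y : H') :
    RCLike.re ⟪y, σ y⟫_ℂ ≤ trAlong f σ * ‖y‖ ^ 2 := by
  set s : H' →L[ℂ] H' := CFC.sqrt σ with hs
  have h0 : (0 : H' →L[ℂ] H') ≤ σ := (σ.nonneg_iff_isPositive).mpr hσ
  have hs0 : (0 : H' →L[ℂ] H') ≤ s := CFC.sqrt_nonneg σ
  have hss : s * s = σ := CFC.sqrt_mul_sqrt_self σ h0
  have hsadj : ContinuousLinearMap.adjoint s = s := by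
    have := ((s.nonneg_iff_isPositive).mp hs0).isSelfAdjoint
    rwa [isSelfAdjoint_iff'] at this
  have key : ∀ z w : H', ⟪z, σ w⟫_ℂ = ⟪s z, s w⟫_ℂ := by
    intro z w
    conv_lhs => rw [← hss]
    rw [ContinuousLinearMap.mul_apply, ← ContinuousLinearMap.adjoint_inner_left, hsadj]
  have hpar : HasSum (fun i => ‖⟪f i, s y⟫_ℂ‖ ^ 2) (‖s y‖ ^ 2) := by
    have h1 : HasSum (fun i => ⟪s y, f i⟫_ℂ * ⟪f i, s y⟫_ℂ) ⟪s y, s y⟫_ℂ := by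
      have := f.summable_inner_mul_inner (s y) (s y)
      simpa [f.tsum_inner_mul_inner (s y) (s y)] using this.hasSum
    have h2 := h1.mapL Complex.reCLM
    have e1 : ∀ i, Complex.reCLM (⟪s y, f i⟫_ℂ * ⟪f i, s y⟫_ℂ) = ‖⟪f i, s y⟫_ℂ‖ ^ 2 := by
      intro i
      have hc : ⟪s y, f i⟫_ℂ = (starRingEnd ℂ) ⟪f i, s y⟫_ℂ := (inner_conj_symm _ _).symm
      rw [hc, RCLike.conj_mul]
      simp [← Complex.ofReal_pow]
    have e2 : Complex.reCLM ⟪s y, s y⟫_ℂ = ‖s y‖ ^ 2 := by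
      simpa using (inner_self_eq_norm_sq (𝕜 := ℂ) (s y))
    convert h2 using 1
    · funext i; exact (e1 i).symm
    · exact e2.symm
  have hterm : ∀ i, ‖⟪f i, s y⟫_ℂ‖ ^ 2 ≤ RCLike.re ⟪f i, σ (f i)⟫_ℂ * ‖y‖ ^ 2 := by
    intro i
    have h3 : ⟪f i, s y⟫_ℂ = ⟪s (f i), y⟫_ℂ := by
      rw [← ContinuousLinearMap.adjoint_inner_left, hsadj]
    have h4 : RCLike.re ⟪f i, σ (f i)⟫_ℂ = ‖s (f i)‖ ^ 2 := by
      rw [key]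
      simpa using (inner_self_eq_norm_sq (𝕜 := ℂ) (s (f i)))
    rw [h3, h4]
    calc ‖⟪s (f i), y⟫_ℂ‖ ^ 2 ≤ (‖s (f i)‖ * ‖y‖) ^ 2 := by
          have := norm_inner_le_norm (𝕜 := ℂ) (s (f i)) y
          exact pow_le_pow_left₀ (norm_nonneg _) this 2
      _ = ‖s (f i)‖ ^ 2 * ‖y‖ ^ 2 := by ring
  have hre : RCLike.re ⟪y, σ y⟫_ℂ = ‖s y‖ ^ 2 := by
    rw [key]; simpa using (inner_self_eq_norm_sq (𝕜 := ℂ) (s y))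
  rw [hre, ← hpar.tsum_eq]
  have hsum2 : Summable fun i => RCLike.re ⟪f i, σ (f i)⟫_ℂ * ‖y‖ ^ 2 := hsum.mul_right _
  calc (∑' i, ‖⟪f i, s y⟫_ℂ‖ ^ 2) ≤ ∑' i, RCLike.re ⟪f i, σ (f i)⟫_ℂ * ‖y‖ ^ 2 :=
        Summable.tsum_le_tsum hterm hpar.summable hsum2
    _ = trAlong f σ * ‖y‖ ^ 2 := by rw [trAlong, tsum_mul_right]

lemma opNorm_le_trAlong {ι : Type*} (f : HilbertBasis ι ℂ H') {σ : H' →L[ℂ] H'}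
    (hσ : σ.IsPositive) (hsum : Summable fun i => RCLike.re ⟪f i, σ (f i)⟫_ℂ) :
    ‖σ‖ ≤ trAlong f σ := by
  set t : ℝ := trAlong f σ with hts
  have ht0 : 0 ≤ t := trAlong_nonneg f hσ
  have hb : ∀ y : H', RCLike.re ⟪y, σ y⟫_ℂ ≤ t * ‖y‖ ^ 2 := fun y => diag_le_trAlong f hσ hsum y
  have h0 : (0 : H' →L[ℂ] H') ≤ σ := (σ.nonneg_iff_isPositive).mpr hσ
  have hσc := (ContinuousLinearMap.isPositive_iff_complex σ).mp hσ
  have hle : σ ≤ (t : ℝ) • (1 : H' →L[ℂ] H') := by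
    rw [ContinuousLinearMap.le_def, ContinuousLinearMap.isPositive_iff_complex]
    intro x
    have hval : ⟪((t : ℝ) • (1 : H' →L[ℂ] H') - σ) x, x⟫_ℂ
        = ((t * ‖x‖ ^ 2 - RCLike.re ⟪σ x, x⟫_ℂ : ℝ) : ℂ) := by
      have h1 : ((t : ℝ) • (1 : H' →L[ℂ] H') - σ) x = (t : ℝ) • x - σ x := by
        simp
      rw [h1, inner_sub_left, RCLike.real_smul_eq_coe_smul (K := ℂ), inner_smul_left,
        inner_self_eq_norm_sq_to_K, ← (hσc x).1]
      push_cast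
      ring_nf
      simp
    have hineq : RCLike.re ⟪σ x, x⟫_ℂ ≤ t * ‖x‖ ^ 2 := by
      have h2 : RCLike.re ⟪σ x, x⟫_ℂ = RCLike.re ⟪x, σ x⟫_ℂ := inner_re_symm _ _
      rw [h2]; exact hb x
    constructor
    · rw [hval]; norm_cast
    · rw [hval]
      rw [RCLike.re_to_complex, Complex.ofReal_re]
      exact sub_nonneg.mpr hineq
  have hmain := CStarAlgebra.norm_le_norm_of_nonneg_of_le h0 hle
  have h2n : ‖(t : ℝ) • (1 : H' →L[ℂ] H')‖ ≤ t := by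
    rw [norm_smul, Real.norm_eq_abs, abs_of_nonneg ht0]
    have hn1 : ‖(1 : H' →L[ℂ] H')‖ ≤ 1 := by
      rw [ContinuousLinearMap.one_def]; exact ContinuousLinearMap.norm_id_le
    nlinarith [norm_nonneg (1 : H' →L[ℂ] H')]
  exact hmain.trans h2n

lemma exists_subseq_weak_limit (g : (ℕ × ℕ) → ℕ → ℂ) (R : ℕ × ℕ → ℝ)
    (hb : ∀ p k, ‖g p k‖ ≤ R p) :
    ∃ φ : ℕ → ℕ, StrictMono φ ∧ ∃ L : ℕ × ℕ → ℂ,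
      ∀ p, Tendsto (fun k => g p (φ k)) atTop (𝓝 (L p)) := by
  have hcomp : IsCompact (Set.univ.pi fun p : ℕ × ℕ => Metric.closedBall (0 : ℂ) (R p)) :=
    isCompact_univ_pi fun p => isCompact_closedBall _ _
  have hmem : ∀ k, (fun p => g p k) ∈
      Set.univ.pi fun p : ℕ × ℕ => Metric.closedBall (0 : ℂ) (R p) := by
    intro k
    rw [Set.mem_univ_pi]
    intro p
    simpa [Metric.mem_closedBall, dist_eq_norm] using hb p k
  obtain ⟨L, -, φ, hφ, hconv⟩ := hcomp.tendsto_subseq hmem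
  exact ⟨φ, hφ, L, fun p => tendsto_pi_nhds.mp hconv p⟩

lemma exists_weak_limit_op (A : ℕ → H' →L[ℂ] H') (C : ℝ) (hC0 : 0 ≤ C) (hC : ∀ k, ‖A k‖ ≤ C)
    (hconv : ∀ x y : H', ∃ l : ℂ, Tendsto (fun k => ⟪x, (A k) y⟫_ℂ) atTop (𝓝 l)) :
    ∃ T : H' →L[ℂ] H', ∀ x y : H', Tendsto (fun k => ⟪x, (A k) y⟫_ℂ) atTop (𝓝 ⟪x, T y⟫_ℂ) := by
  classical
  set l : H' → H' → ℂ := fun x y => Classical.choose (hconv x y) with hldef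
  have hl : ∀ x y : H', Tendsto (fun k => ⟪x, (A k) y⟫_ℂ) atTop (𝓝 (l x y)) :=
    fun x y => Classical.choose_spec (hconv x y)
  have hl' : ∀ x y : H', Tendsto (fun k => ⟪(A k) y, x⟫_ℂ) atTop (𝓝 (starRingEnd ℂ (l x y))) := by
    intro x y
    have heq : (fun k => ⟪(A k) y, x⟫_ℂ) = fun k => star ⟪x, (A k) y⟫_ℂ := by
      funext k; rw [← inner_conj_symm]; rfl
    rw [heq]
    exact (continuous_star.tendsto (l x y)).comp (hl x y)
  have hbound : ∀ x y : H', ‖starRingEnd ℂ (l x y)‖ ≤ C * ‖y‖ * ‖x‖ := by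
    intro x y
    refine le_of_tendsto (hl' x y).norm (Eventually.of_forall fun k => ?_)
    calc ‖⟪(A k) y, x⟫_ℂ‖ ≤ ‖(A k) y‖ * ‖x‖ := norm_inner_le_norm _ _
      _ ≤ (C * ‖y‖) * ‖x‖ := by
          have h1 : ‖(A k) y‖ ≤ C * ‖y‖ :=
            le_trans ((A k).le_opNorm y) (mul_le_mul_of_nonneg_right (hC k) (norm_nonneg _))
          exact mul_le_mul_of_nonneg_right h1 (norm_nonneg _)
  have Lfun : ∀ y : H', ∃ F : H' →L[ℂ] ℂ, (∀ x, F x = starRingEnd ℂ (l x y)) ∧ ‖F‖ ≤ C * ‖y‖ := by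
    intro y
    have hadd : ∀ x x' : H', starRingEnd ℂ (l (x + x') y)
        = starRingEnd ℂ (l x y) + starRingEnd ℂ (l x' y) := by
      intro x x'
      refine tendsto_nhds_unique (hl' (x + x') y) ?_
      have := (hl' x y).add (hl' x' y)
      simpa [inner_add_right] using this
    have hsmul : ∀ (c : ℂ) (x : H'), starRingEnd ℂ (l (c • x) y)
        = c * starRingEnd ℂ (l x y) := by
      intro c x
      refine tendsto_nhds_unique (hl' (c • x) y) ?_
      have := (hl' x y).const_mul c
      simpa [inner_smul_right] using this
    refine ⟨LinearMap.mkContinuous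
      { toFun := fun x => starRingEnd ℂ (l x y),
        map_add' := hadd,
        map_smul' := fun c x => by simpa using hsmul c x } (C * ‖y‖)
      (fun x => by simpa [mul_assoc] using hbound x y), fun x => rfl, ?_⟩
    exact LinearMap.mkContinuous_norm_le _ (by positivity) _
  choose F hF hFnorm using Lfun
  set Tmap : H' → H' := fun y => (InnerProductSpace.toDual ℂ H').symm (F y) with hTmap
  have hT : ∀ y x : H', ⟪Tmap y, x⟫_ℂ = starRingEnd ℂ (l x y) := by
    intro y x
    rw [hTmap]
    rw [InnerProductSpace.toDual_symm_apply]
    exact hF y x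
  have hTadd : ∀ y y' : H', Tmap (y + y') = Tmap y + Tmap y' := by
    intro y y'
    refine ext_inner_right ℂ fun v => ?_
    rw [inner_add_left, hT, hT, hT]
    refine tendsto_nhds_unique (hl' v (y + y')) ?_
    have := (hl' v y).add (hl' v y')
    simpa [map_add, inner_add_left] using this
  have hTsmul : ∀ (c : ℂ) (y : H'), Tmap (c • y) = c • Tmap y := by
    intro c y
    refine ext_inner_right ℂ fun v => ?_
    rw [inner_smul_left, hT, hT]
    refine tendsto_nhds_unique (hl' v (c • y)) ?_
    have := (hl' v y).const_mul (starRingEnd ℂ c)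
    simpa [map_smul, inner_smul_left, mul_comm] using this
  have hTnorm : ∀ y : H', ‖Tmap y‖ ≤ C * ‖y‖ := by
    intro y
    rw [hTmap]
    simpa using hFnorm y
  refine ⟨LinearMap.mkContinuous
    { toFun := Tmap, map_add' := hTadd, map_smul' := fun c y => by simpa using hTsmul c y }
    C hTnorm, ?_⟩
  intro x y
  have hval : ⟪x, Tmap y⟫_ℂ = l x y := by
    rw [← inner_conj_symm, hT]
    simp
  simpa [hval] using hl x y

lemma weak_limits_everywhere (A : ℕ → H' →L[ℂ] H') (C : ℝ) (hC0 : 0 ≤ C) (hC : ∀ k, ‖A k‖ ≤ C)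
    (u : ℕ → H') (hu : DenseRange u)
    (hconv : ∀ m n : ℕ, ∃ l : ℂ, Tendsto (fun k => ⟪u m, (A k) (u n)⟫_ℂ) atTop (𝓝 l))
    (x y : H') : ∃ l : ℂ, Tendsto (fun k => ⟪x, (A k) y⟫_ℂ) atTop (𝓝 l) := by
  have hcauchy : CauchySeq (fun k => ⟪x, (A k) y⟫_ℂ) := by
    rw [Metric.cauchySeq_iff]
    intro ε hε
    set δ : ℝ := min 1 (ε / (8 * (C + 1) * (‖x‖ + ‖y‖ + 1))) with hδdef
    have hδpos : 0 < δ := by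
      apply lt_min one_pos
      apply div_pos hε
      positivity
    have hδ1 : δ ≤ 1 := min_le_left _ _
    obtain ⟨m, hm⟩ := hu.exists_dist_lt x hδpos
    obtain ⟨n, hn⟩ := hu.exists_dist_lt y hδpos
    rw [dist_eq_norm] at hm hn
    have hkey : ∀ k, ‖⟪x, (A k) y⟫_ℂ - ⟪u m, (A k) (u n)⟫_ℂ‖ ≤ ε / 4 := by
      intro k
      have hsplit : ⟪x, (A k) y⟫_ℂ - ⟪u m, (A k) (u n)⟫_ℂ
          = ⟪x - u m, (A k) y⟫_ℂ + ⟪u m, (A k) (y - u n)⟫_ℂ := by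
        rw [inner_sub_left, map_sub, inner_sub_right]
        ring
      have hAy : ‖(A k) y‖ ≤ C * ‖y‖ :=
        le_trans ((A k).le_opNorm y) (mul_le_mul_of_nonneg_right (hC k) (norm_nonneg _))
      have hAyn : ‖(A k) (y - u n)‖ ≤ C * δ := by
        refine le_trans ((A k).le_opNorm _) ?_
        have := mul_le_mul (hC k) hn.le (norm_nonneg _) hC0
        linarith
      have hum : ‖u m‖ ≤ ‖x‖ + 1 := by
        have : ‖u m‖ ≤ ‖x‖ + ‖x - u m‖ := by
          nlinarith [abs_le.mp (abs_norm_sub_norm_le x (u m))]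
        linarith [hm.le, hδ1]
      have h1 : ‖⟪x - u m, (A k) y⟫_ℂ‖ ≤ δ * (C * ‖y‖) := by
        refine le_trans (norm_inner_le_norm _ _) ?_
        exact mul_le_mul hm.le hAy (norm_nonneg _) hδpos.le
      have h2 : ‖⟪u m, (A k) (y - u n)⟫_ℂ‖ ≤ (‖x‖ + 1) * (C * δ) := by
        refine le_trans (norm_inner_le_norm _ _) ?_
        exact mul_le_mul hum hAyn (norm_nonneg _) (by positivity)
      have htot : ‖⟪x, (A k) y⟫_ℂ - ⟪u m, (A k) (u n)⟫_ℂ‖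
          ≤ δ * (C * ‖y‖) + (‖x‖ + 1) * (C * δ) := by
        rw [hsplit]
        exact le_trans (norm_add_le _ _) (add_le_add h1 h2)
      refine le_trans htot ?_
      have hδ2 : δ ≤ ε / (8 * (C + 1) * (‖x‖ + ‖y‖ + 1)) := min_le_right _ _
      have hd : δ * (8 * (C + 1) * (‖x‖ + ‖y‖ + 1)) ≤ ε := by
        rw [← le_div_iff₀ (by positivity)]
        exact hδ2
      nlinarith [norm_nonneg x, norm_nonneg y, hδpos.le]
    obtain ⟨l, hl⟩ := hconv m n
    have hgc := hl.cauchySeq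
    rw [Metric.cauchySeq_iff] at hgc
    obtain ⟨N, hN⟩ := hgc (ε / 3) (by linarith)
    refine ⟨N, fun k hk k' hk' => ?_⟩
    have d1 := hkey k
    have d2 := hkey k'
    have d3 := hN k hk k' hk'
    rw [dist_eq_norm] at d3 ⊢
    calc ‖⟪x, (A k) y⟫_ℂ - ⟪x, (A k') y⟫_ℂ‖
        = ‖(⟪x, (A k) y⟫_ℂ - ⟪u m, (A k) (u n)⟫_ℂ)
            + (⟪u m, (A k) (u n)⟫_ℂ - ⟪u m, (A k') (u n)⟫_ℂ)
            + (⟪u m, (A k') (u n)⟫_ℂ - ⟪x, (A k') y⟫_ℂ)‖ := by ring_nf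
      _ ≤ ‖⟪x, (A k) y⟫_ℂ - ⟪u m, (A k) (u n)⟫_ℂ‖
            + ‖⟪u m, (A k) (u n)⟫_ℂ - ⟪u m, (A k') (u n)⟫_ℂ‖
            + ‖⟪u m, (A k') (u n)⟫_ℂ - ⟪x, (A k') y⟫_ℂ‖ := norm_add₃_le
      _ < ε := by
          have d2' : ‖⟪u m, (A k') (u n)⟫_ℂ - ⟪x, (A k') y⟫_ℂ‖ ≤ ε / 4 := by
            rw [norm_sub_rev]; exact d2
          linarith
  exact cauchySeq_tendsto_of_complete hcauchy

lemma isPositive_of_dense {A : H' →L[ℂ] H'} {D : Submodule ℂ H'} (hD : Dense (D : Set H'))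
    (h : ∀ z ∈ D, 0 ≤ (⟪A z, z⟫_ℂ).re ∧ (⟪A z, z⟫_ℂ).im = 0) : A.IsPositive := by
  have hcont : Continuous fun z : H' => ⟪A z, z⟫_ℂ := (A.continuous.inner continuous_id)
  have hre : ∀ z : H', 0 ≤ (⟪A z, z⟫_ℂ).re := by
    have hclosed : IsClosed {z : H' | 0 ≤ (⟪A z, z⟫_ℂ).re} :=
      isClosed_le continuous_const (Complex.continuous_re.comp hcont)
    have hsub : (D : Set H') ⊆ {z : H' | 0 ≤ (⟪A z, z⟫_ℂ).re} := fun z hz => (h z hz).1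
    have := closure_minimal hsub hclosed
    rw [hD.closure_eq] at this
    exact fun z => this (Set.mem_univ z)
  have him : ∀ z : H', (⟪A z, z⟫_ℂ).im = 0 := by
    have hclosed : IsClosed {z : H' | (⟪A z, z⟫_ℂ).im = 0} :=
      isClosed_eq (Complex.continuous_im.comp hcont) continuous_const
    have hsub : (D : Set H') ⊆ {z : H' | (⟪A z, z⟫_ℂ).im = 0} := fun z hz => (h z hz).2
    have := closure_minimal hsub hclosed
    rw [hD.closure_eq] at this
    exact fun z => this (Set.mem_univ z)
  rw [ContinuousLinearMap.isPositive_iff_complex]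
  intro x
  refine ⟨?_, by simpa [RCLike.re_to_complex] using hre x⟩
  rw [RCLike.re_to_complex]
  exact Complex.ext (by simp) (by simp [him x])

lemma inner_nonneg_of_isPositive {B : H' →L[ℂ] H'} (hB : B.IsPositive) (x : H') :
    0 ≤ (⟪x, B x⟫_ℂ).re ∧ (⟪x, B x⟫_ℂ).im = 0 := by
  have h := (ContinuousLinearMap.isPositive_iff_complex B).mp hB x
  have hc : ⟪x, B x⟫_ℂ = starRingEnd ℂ ⟪B x, x⟫_ℂ := (inner_conj_symm _ _).symm
  rw [hc, ← h.1]
  constructor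
  · simpa [RCLike.re_to_complex] using h.2
  · simp

lemma swap_inner_nonneg {B : H' →L[ℂ] H'} {x : H'}
    (h : 0 ≤ (⟪x, B x⟫_ℂ).re ∧ (⟪x, B x⟫_ℂ).im = 0) :
    0 ≤ (⟪B x, x⟫_ℂ).re ∧ (⟪B x, x⟫_ℂ).im = 0 := by
  have hc : ⟪B x, x⟫_ℂ = starRingEnd ℂ ⟪x, B x⟫_ℂ := (inner_conj_symm _ _).symm
  rw [hc]
  refine ⟨?_, ?_⟩
  · rw [Complex.conj_re]; exact h.1
  · rw [Complex.conj_im, h.2, neg_zero]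

lemma lim_nonneg_real {F : ℕ → ℂ} {w : ℂ} (h : Tendsto F atTop (𝓝 w))
    (hF : ∀ k, 0 ≤ (F k).re ∧ (F k).im = 0) : 0 ≤ w.re ∧ w.im = 0 := by
  constructor
  · exact ge_of_tendsto ((Complex.continuous_re.tendsto _).comp h)
      (Eventually.of_forall fun k => (hF k).1)
  · have h1 : Tendsto (fun k => (F k).im) atTop (𝓝 w.im) :=
      (Complex.continuous_im.tendsto _).comp h
    have h2 : (fun k => (F k).im) = fun _ => (0 : ℝ) := funext fun k => (hF k).2
    rw [h2] at h1
    exact tendsto_nhds_unique h1 tendsto_const_nhds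

end HilbertAux

section TensorAux

variable {HA HB H : Type*} [NormedAddCommGroup HA] [InnerProductSpace ℂ HA]
    [NormedAddCommGroup HB] [InnerProductSpace ℂ HB]
    [NormedAddCommGroup H] [InnerProductSpace ℂ H]

lemma map_one_weak_conv (TP : HilbertTensor HA HB H)
    (A : ℕ → HB →L[ℂ] HB) (T : HB →L[ℂ] HB)
    (hconv : ∀ x y : HB, Tendsto (fun k => ⟪x, (A k) y⟫_ℂ) atTop (𝓝 ⟪x, T y⟫_ℂ))
    {w z : H} (hw : w ∈ Submodule.span ℂ {z : H | ∃ a b, z = TP.tmul a b})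
    (hz : z ∈ Submodule.span ℂ {z : H | ∃ a b, z = TP.tmul a b}) :
    Tendsto (fun k => ⟪w, (TP.map 1 (A k)) z⟫_ℂ) atTop (𝓝 ⟪w, (TP.map 1 T) z⟫_ℂ) := by
  induction hw, hz using Submodule.span_induction₂ with
  | mem_mem x y hx hy =>
      obtain ⟨a, b, rfl⟩ := hx
      obtain ⟨a', b', rfl⟩ := hy
      simp only [TP.map_tmul, ContinuousLinearMap.one_apply, TP.inner_tmul]
      exact (hconv b b').const_mul _
  | zero_left y hy => simp only [inner_zero_left]; exact tendsto_const_nhds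
  | zero_right x hx => simp only [map_zero, inner_zero_right]; exact tendsto_const_nhds
  | add_left x y z hx hy hz h1 h2 => simpa only [inner_add_left] using h1.add h2
  | add_right x y z hx hy hz h1 h2 => simpa only [map_add, inner_add_right] using h1.add h2
  | smul_left r x y hx hy h => simpa only [inner_smul_left] using h.const_mul _
  | smul_right r x y hx hy h => simpa only [map_smul, inner_smul_right] using h.const_mul _

end TensorAux

end AuxLemmas

noncomputable section

/-- If `Λ(ρ_AB|B)` is finite (some admissible `σ` exists), then the
infimum is attained by a positive trace-class `σ̃_B`. -/
theorem LamB_attained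
    {HA HB H : Type*} [NormedAddCommGroup HA] [InnerProductSpace ℂ HA]
    [TopologicalSpace.SeparableSpace HA]
    [NormedAddCommGroup HB] [InnerProductSpace ℂ HB] [CompleteSpace HB]
    [TopologicalSpace.SeparableSpace HB]
    [NormedAddCommGroup H] [InnerProductSpace ℂ H] [CompleteSpace H]
    [TopologicalSpace.SeparableSpace H]
    (TP : HilbertTensor HA HB H)
    {ι κ : Type*} (e : HilbertBasis ι ℂ H) (f : HilbertBasis κ ℂ HB)
    (ρ : H →L[ℂ] H)
    (hρ : ρ.IsPositive) (hρtc : IsTraceClass e ρ) (hρtr : trAlong e ρ = 1)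
    (hne : ∃ σ : HB →L[ℂ] HB, σ.IsPositive ∧ IsTraceClass f σ ∧ ρ ≤ TP.map 1 σ) :
    ∃ σ : HB →L[ℂ] HB, σ.IsPositive ∧ IsTraceClass f σ ∧ ρ ≤ TP.map 1 σ ∧
      (trAlong f σ : EReal) = LamB TP f ρ := by
  classical
  set S : Set EReal := {x : EReal | ∃ σ : HB →L[ℂ] HB, σ.IsPositive ∧ IsTraceClass f σ ∧
    ρ ≤ TP.map 1 σ ∧ x = (trAlong f σ : EReal)} with hS
  have hLam : LamB TP f ρ = sInf S := rfl
  have hTCiff : ∀ σ : HB →L[ℂ] HB, σ.IsPositive →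
      (IsTraceClass f σ ↔ Summable fun i => RCLike.re ⟪f i, σ (f i)⟫_ℂ) := by
    intro σ hσ
    unfold IsTraceClass
    rw [absOp_of_isPositive_s16 hσ]
  obtain ⟨σ₀, hσ₀pos, hσ₀tc, hσ₀le⟩ := hne
  have hmem₀ : (trAlong f σ₀ : EReal) ∈ S := ⟨σ₀, hσ₀pos, hσ₀tc, hσ₀le, rfl⟩
  have hlb : ∀ x ∈ S, (0 : EReal) ≤ x := by
    rintro x ⟨σ, hσ, -, -, rfl⟩
    exact_mod_cast trAlong_nonneg f hσ
  have h0le : (0 : EReal) ≤ sInf S := le_sInf hlb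
  have hne_top : sInf S ≠ ⊤ :=
    ((sInf_le hmem₀).trans_lt (EReal.coe_lt_top _)).ne
  have hne_bot : sInf S ≠ ⊥ := by
    intro hbot
    rw [hbot] at h0le
    exact absurd h0le (by simp)
  set c : ℝ := (sInf S).toReal with hc
  have hcoe : (c : EReal) = sInf S := EReal.coe_toReal hne_top hne_bot
  have hc0 : 0 ≤ c := by
    have := h0le
    rw [← hcoe] at this
    exact_mod_cast this
  -- minimizing sequence
  have hseq : ∀ k : ℕ, ∃ σ : HB →L[ℂ] HB, σ.IsPositive ∧ IsTraceClass f σ ∧ ρ ≤ TP.map 1 σ ∧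
      trAlong f σ < c + 1 / ((k : ℝ) + 1) := by
    intro k
    have hpos1 : (0 : ℝ) < 1 / ((k : ℝ) + 1) := by positivity
    have hlt : sInf S < ((c + 1 / ((k : ℝ) + 1) : ℝ) : EReal) := by
      rw [← hcoe]
      exact_mod_cast lt_add_of_pos_right c hpos1
    obtain ⟨x, hxS, hxlt⟩ := sInf_lt_iff.mp hlt
    obtain ⟨σ, h1, h2, h3, rfl⟩ := hxS
    exact ⟨σ, h1, h2, h3, EReal.coe_lt_coe_iff.mp hxlt⟩
  choose σs hpos htc hle htr using hseq
  have hsumdiag : ∀ k, Summable fun i => RCLike.re ⟪f i, (σs k) (f i)⟫_ℂ :=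
    fun k => (hTCiff _ (hpos k)).mp (htc k)
  have htrle : ∀ k, trAlong f (σs k) ≤ c + 1 := by
    intro k
    refine (htr k).le.trans ?_
    have h1 : 1 / ((k : ℝ) + 1) ≤ 1 := by
      rw [div_le_one (by positivity)]
      linarith [Nat.cast_nonneg (α := ℝ) k]
    linarith
  have hnormle : ∀ k, ‖σs k‖ ≤ c + 1 :=
    fun k => (opNorm_le_trAlong f (hpos k) (hsumdiag k)).trans (htrle k)
  -- dense sequence in HB
  have hnonempty : Nonempty HB := ⟨0⟩
  set u : ℕ → HB := TopologicalSpace.denseSeq HB with hu_def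
  have hu : DenseRange u := TopologicalSpace.denseRange_denseSeq HB
  -- diagonal extraction of a weak*-convergent subsequence on the dense set
  set g : (ℕ × ℕ) → ℕ → ℂ := fun p k => ⟪u p.1, (σs k) (u p.2)⟫_ℂ with hg
  have hgB : ∀ p k, ‖g p k‖ ≤ (c + 1) * ‖u p.1‖ * ‖u p.2‖ := by
    intro p k
    calc ‖g p k‖ ≤ ‖u p.1‖ * ‖(σs k) (u p.2)‖ := norm_inner_le_norm _ _
      _ ≤ ‖u p.1‖ * ((c + 1) * ‖u p.2‖) := by
          refine mul_le_mul_of_nonneg_left ?_ (norm_nonneg _)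
          exact le_trans ((σs k).le_opNorm _)
            (mul_le_mul_of_nonneg_right (hnormle k) (norm_nonneg _))
      _ = (c + 1) * ‖u p.1‖ * ‖u p.2‖ := by ring
  obtain ⟨φ, hφ, L, hLconv⟩ := exists_subseq_weak_limit g
    (fun p => (c + 1) * ‖u p.1‖ * ‖u p.2‖) hgB
  set A : ℕ → HB →L[ℂ] HB := fun k => σs (φ k) with hA
  have hApos : ∀ k, (A k).IsPositive := fun k => hpos (φ k)
  have hAnorm : ∀ k, ‖A k‖ ≤ c + 1 := fun k => hnormle (φ k)
  have hconv0 : ∀ m n : ℕ, ∃ l : ℂ, Tendsto (fun k => ⟪u m, (A k) (u n)⟫_ℂ) atTop (𝓝 l) :=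
    fun m n => ⟨L (m, n), hLconv (m, n)⟩
  have hconvall : ∀ x y : HB, ∃ l : ℂ, Tendsto (fun k => ⟪x, (A k) y⟫_ℂ) atTop (𝓝 l) :=
    fun x y => weak_limits_everywhere A (c + 1) (by linarith) hAnorm u hu hconv0 x y
  obtain ⟨T, hT⟩ := exists_weak_limit_op A (c + 1) (by linarith) hAnorm hconvall
  -- T is positive
  have hTkey : ∀ z : HB, 0 ≤ (⟪T z, z⟫_ℂ).re ∧ (⟪T z, z⟫_ℂ).im = 0 := by
    intro z
    refine swap_inner_nonneg (lim_nonneg_real (hT z z) fun k => ?_)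
    exact inner_nonneg_of_isPositive (hApos k) z
  have hTpos : T.IsPositive := by
    refine isPositive_of_dense (D := (⊤ : Submodule ℂ HB)) ?_ fun z _ => hTkey z
    rw [Submodule.top_coe]
    exact dense_univ
  -- ρ ≤ TP.map 1 T
  have hρleT : ρ ≤ TP.map 1 T := by
    rw [ContinuousLinearMap.le_def]
    refine isPositive_of_dense (D := Submodule.span ℂ {z : H | ∃ a b, z = TP.tmul a b})
      TP.dense_span ?_
    intro z hz
    have hconvz : Tendsto (fun k => ⟪z, (TP.map 1 (A k) - ρ) z⟫_ℂ) atTop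
        (𝓝 ⟪z, (TP.map 1 T - ρ) z⟫_ℂ) := by
      have h1 := map_one_weak_conv TP A T (fun x y => hT x y) hz hz
      have h2 := h1.sub (tendsto_const_nhds (x := ⟪z, ρ z⟫_ℂ))
      simpa [ContinuousLinearMap.sub_apply, inner_sub_right] using h2
    refine swap_inner_nonneg (lim_nonneg_real hconvz fun k => ?_)
    exact inner_nonneg_of_isPositive ((ContinuousLinearMap.le_def _ _).mp (hle (φ k))) z
  -- trace facts
  set d : κ → ℝ := fun i => RCLike.re ⟪f i, T (f i)⟫_ℂ with hd
  have hdconv : ∀ i, Tendsto (fun k => RCLike.re ⟪f i, (A k) (f i)⟫_ℂ) atTop (𝓝 (d i)) :=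
    fun i => (Complex.continuous_re.tendsto _).comp (hT (f i) (f i))
  have hd0 : ∀ i, 0 ≤ d i := fun i => diag_nonneg hTpos (f i)
  have hpartial : ∀ F : Finset κ, ∑ i ∈ F, d i ≤ c := by
    intro Fs
    have h1 : Tendsto (fun k => ∑ i ∈ Fs, RCLike.re ⟪f i, (A k) (f i)⟫_ℂ) atTop
        (𝓝 (∑ i ∈ Fs, d i)) := tendsto_finset_sum Fs fun i _ => hdconv i
    have h2 : ∀ k, ∑ i ∈ Fs, RCLike.re ⟪f i, (A k) (f i)⟫_ℂ ≤ c + 1 / ((φ k : ℝ) + 1) := by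
      intro k
      have hsle := Summable.sum_le_tsum Fs (fun i _ => diag_nonneg (hApos k) (f i)) (hsumdiag (φ k))
      exact hsle.trans (htr (φ k)).le
    have h3 : Tendsto (fun k => c + 1 / ((φ k : ℝ) + 1)) atTop (𝓝 c) := by
      have h4 : Tendsto (fun k => ((φ k : ℝ) + 1)) atTop atTop :=
        tendsto_atTop_add_const_right _ 1 (tendsto_natCast_atTop_atTop.comp hφ.tendsto_atTop)
      have h6 := h4.inv_tendsto_atTop
      have h7 := tendsto_const_nhds (x := c) (f := atTop (α := ℕ)) |>.add h6
      simpa [one_div] using h7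
    exact le_of_tendsto_of_tendsto' h1 h3 h2
  have hdsum : Summable d := summable_of_sum_le hd0 hpartial
  have hTtc : IsTraceClass f T := (hTCiff T hTpos).mpr hdsum
  have htrT_le : trAlong f T ≤ c := Summable.tsum_le_of_sum_le hdsum hpartial
  have hmemT : (trAlong f T : EReal) ∈ S := ⟨T, hTpos, hTtc, hρleT, rfl⟩
  have htrT_ge : c ≤ trAlong f T :=
    EReal.coe_le_coe_iff.mp (hcoe.le.trans (sInf_le hmemT))
  refine ⟨T, hTpos, hTtc, hρleT, ?_⟩
  rw [hLam, ← hcoe, le_antisymm htrT_le htrT_ge]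


end
end
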